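/- Let A be a unital algebra over ℂ, n ∈ ℕ, and let τ : A^{2n+1} → ℂ be a (2n+1)-multilinear cyclic cocycle. Let p ∈ A be an idempotent (p·p = p) and let a ∈ A be arbitrary. Then τ(a·p − p·a, p, …, p) = 0, and consequently the 'Lie derivative' sum Σ_{i=0}^{2n} τ(p, …, p, a·p − p·a, p, …, p) (with the commutator a·p − p·a placed in the i-th slot) vanishes. -/

import Mathlib

/-- The Hochschild coboundary of a `(2n+1)`-multilinear functional `τ : A^{2n+1} → ℂ`:
`(bτ)(a₀, …, a_{2n+1}) = Σ_{i=0}^{2n} (−1)^i τ(a₀, …, aᵢ·a_{i+1}, …, a_{2n+1})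
  + (−1)^{2n+1} τ(a_{2n+1}·a₀, a₁, …, a_{2n})`. -/
noncomputable def hochschildCoboundary {A : Type*} [Ring A] (n : ℕ)
    (τ : (Fin (2 * n + 1) → A) → ℂ) (a : Fin (2 * n + 1 + 1) → A) : ℂ :=
  (∑ i : Fin (2 * n + 1), (-1 : ℂ) ^ (i : ℕ) *
      τ (fun j => if (j : ℕ) < (i : ℕ) then a j.castSucc
          else if (j : ℕ) = (i : ℕ) then a i.castSucc * a i.succ
          else a j.succ)) +
    (-1 : ℂ) ^ (2 * n + 1) *
      τ (fun j => if (j : ℕ) = 0 then a (Fin.last (2 * n + 1)) * a 0 else a j.castSucc)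

/-- Let `A` be a unital algebra over `ℂ`, `τ` a `(2n+1)`-multilinear cyclic
cocycle, `p ∈ A` an idempotent and `a ∈ A` arbitrary.  Then `τ(a·p − p·a, p, …, p) = 0`, and
consequently the "Lie derivative" sum `Σᵢ τ(p, …, a·p − p·a, …, p)` (commutator in the
`i`-th slot) vanishes. -/
theorem stmt5 {A : Type*} [Ring A] [Algebra ℂ A] (n : ℕ)
    (τ : MultilinearMap ℂ (fun _ : Fin (2 * n + 1) => A) ℂ)
    (hcyclic : ∀ a : Fin (2 * n + 1) → A, τ (fun i => a (i - 1)) = τ a)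
    (hcocycle : ∀ a : Fin (2 * n + 1 + 1) → A,
      hochschildCoboundary n (fun v => τ v) a = 0)
    (p a : A) (hp : p * p = p) :
    τ (Function.update (fun _ : Fin (2 * n + 1) => p) 0 (a * p - p * a)) = 0 ∧
    ∑ i : Fin (2 * n + 1),
      τ (Function.update (fun _ : Fin (2 * n + 1) => p) i (a * p - p * a)) = 0 := by
  classical
  set base : Fin (2 * n + 1) → A := fun _ => p with hbase
  -- the vector (a, p, p, ..., p) of length 2n+2
  set v : Fin (2 * n + 1 + 1) → A := Function.update (fun _ => p) 0 a with hv
  have hv0 : v 0 = a := by simp [hv]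
  have hvne : ∀ j : Fin (2 * n + 1 + 1), j ≠ 0 → v j = p := by
    intro j hj; simp [hv, Function.update_of_ne hj]
  -- evaluate each summand of the coboundary
  have hterm : ∀ i : Fin (2 * n + 1),
      (fun j : Fin (2 * n + 1) => if (j : ℕ) < (i : ℕ) then v j.castSucc
          else if (j : ℕ) = (i : ℕ) then v i.castSucc * v i.succ
          else v j.succ)
      = (if i = 0 then Function.update base 0 (a * p) else Function.update base 0 a) := by
    intro i
    by_cases hi : i = 0
    · subst hi
      simp only [if_pos rfl]
      funext j
      by_cases hj : j = 0
      · subst hj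
        have h2 : v (1 : Fin (2 * n + 1 + 1)) = p := by
          apply hvne
          simp [Fin.ext_iff]
        simp [hv0, h2, Function.update_self]
      · have hjv : (j : ℕ) ≠ 0 := fun h => hj (Fin.ext h)
        have h3 : v j.succ = p := by
          apply hvne; exact Fin.succ_ne_zero j
        simp [hjv, h3, Function.update_of_ne hj, hbase]
    · rw [if_neg hi]
      have hiv : (i : ℕ) ≠ 0 := fun h => hi (Fin.ext h)
      funext j
      by_cases hj : j = 0
      · subst hj
        have hlt : (0 : ℕ) < (i : ℕ) := Nat.pos_of_ne_zero hiv
        simp [hlt, hv0, Function.update_self]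
      · have hjv : (j : ℕ) ≠ 0 := fun h => hj (Fin.ext h)
        rw [Function.update_of_ne hj]
        rcases lt_trichotomy (j : ℕ) (i : ℕ) with h | h | h
        · rw [if_pos h]
          apply hvne; simp [Fin.ext_iff, hjv]
        · rw [if_neg (by omega), if_pos h]
          have hcs : v i.castSucc = p := by
            apply hvne; simp [Fin.ext_iff, hiv]
          have hsc : v i.succ = p := by
            apply hvne; exact Fin.succ_ne_zero i
          rw [hcs, hsc, hp]
        · rw [if_neg (by omega), if_neg (by omega)]
          apply hvne; exact Fin.succ_ne_zero j
  -- evaluate the last vector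
  have hlast : (fun j : Fin (2 * n + 1) => if (j : ℕ) = 0 then
        v (Fin.last (2 * n + 1)) * v 0 else v j.castSucc)
      = Function.update base 0 (p * a) := by
    funext j
    by_cases hj : j = 0
    · subst hj
      have h1 : v (Fin.last (2 * n + 1)) = p := by
        apply hvne; simp [Fin.ext_iff]
      simp [h1, hv0, Function.update_self]
    · have hjv : (j : ℕ) ≠ 0 := fun h => hj (Fin.ext h)
      have h2 : v j.castSucc = p := by
        apply hvne; simp [Fin.ext_iff, hjv]
      simp [hjv, h2, Function.update_of_ne hj, hbase]
  have h := hcocycle v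
  unfold hochschildCoboundary at h
  simp only [hterm, hlast] at h
  -- sum of (-1)^i * ite
  have hsplit : ∀ i : Fin (2 * n + 1),
      (-1 : ℂ) ^ (i : ℕ) * τ (if i = 0 then Function.update base 0 (a * p)
          else Function.update base 0 a)
      = (-1 : ℂ) ^ (i : ℕ) * τ (Function.update base 0 a)
        + (if i = (0 : Fin (2 * n + 1)) then
            τ (Function.update base 0 (a * p)) - τ (Function.update base 0 a) else 0) := by
    intro i
    by_cases hi : i = 0
    · subst hi; simp
    · simp [hi]
  have hgeom : ∑ i : Fin (2 * n + 1), (-1 : ℂ) ^ (i : ℕ) = 1 := by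
    rw [Fin.sum_univ_eq_sum_range (fun i => (-1 : ℂ) ^ i)]
    rw [neg_one_geom_sum]
    simp [Nat.even_add_one, Nat.even_mul]
  have hodd : (-1 : ℂ) ^ (2 * n + 1) = -1 := Odd.neg_one_pow ⟨n, by ring⟩
  rw [Finset.sum_congr rfl (fun i _ => hsplit i)] at h
  rw [Finset.sum_add_distrib, ← Finset.sum_mul, hgeom, one_mul,
    Finset.sum_ite_eq' Finset.univ (0 : Fin (2 * n + 1)), if_pos (Finset.mem_univ _),
    hodd] at h
  -- now h : τ(update base 0 a) + (τ(... a*p) - τ(... a)) + (-1) * τ(... p*a) = 0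
  have hmain : τ (Function.update base 0 (a * p)) = τ (Function.update base 0 (p * a)) := by
    linear_combination h
  have key : τ (Function.update base 0 (a * p - p * a)) = 0 := by
    rw [τ.map_update_sub, hmain, sub_self]
  refine ⟨key, ?_⟩
  -- cyclic shifting
  have shift : ∀ k : Fin (2 * n + 1),
      τ (Function.update base (k + 1) (a * p - p * a))
      = τ (Function.update base k (a * p - p * a)) := by
    intro k
    have hc := hcyclic (Function.update base k (a * p - p * a))
    rw [← hc]
    congr 1
    funext i
    by_cases hik : i = k + 1
    · subst hik
      rw [Function.update_self]
      have : k + 1 - 1 = k := by exact add_sub_cancel_right k 1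
      rw [this, Function.update_self]
    · rw [Function.update_of_ne hik, Function.update_of_ne]
      intro h'
      exact hik (by rw [← h']; exact (sub_add_cancel i 1).symm)
  have allEq : ∀ k : Fin (2 * n + 1),
      τ (Function.update base k (a * p - p * a))
      = τ (Function.update base 0 (a * p - p * a)) := by
    intro k
    open Fin.NatCast in
    have hnat : ∀ m : ℕ, τ (Function.update base ((m : Fin (2 * n + 1))) (a * p - p * a))
        = τ (Function.update base 0 (a * p - p * a)) := by
      intro m
      induction m with
      | zero => simp
      | succ m ih =>
        have : ((m + 1 : ℕ) : Fin (2 * n + 1)) = (m : Fin (2 * n + 1)) + 1 := by exact Nat.cast_succ m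
        rw [this, shift, ih]
    have := hnat (k : ℕ)
    rwa [Fin.cast_val_eq_self] at this
  rw [Finset.sum_congr rfl (fun i _ => allEq i)]
  simp [key]
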